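/- Let λ ∈ ℝ with λ ≠ 0 and let A_λ be the fuzzy sphere algebra. Then the center of A_λ is trivial: an element a ∈ A_λ commutes with every element of A_λ if and only if a is a scalar multiple of the identity, i.e. Z(A_λ) = ℂ·1. -/

import Mathlib

open scoped BigOperators

/-- The Levi-Civita symbol on `{1,2,3}` (totally antisymmetric, `ε₁₂₃ = 1`), as a complex
number. -/
noncomputable def epsC (i j k : Fin 3) : ℂ :=
  (((j : ℕ) : ℂ) - ((i : ℕ) : ℂ)) * (((k : ℕ) : ℂ) - ((j : ℕ) : ℂ)) *
    (((k : ℕ) : ℂ) - ((i : ℕ) : ℂ)) / 2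

/-- The defining relations of the fuzzy sphere algebra: the commutation relations
`x_i x_j − x_j x_i = 2iλ ε_{ijk} x_k` and the sphere relation `Σ x_i² = 1 − λ²`. -/
inductive FuzzyRel (t : ℝ) : FreeAlgebra ℂ (Fin 3) → FreeAlgebra ℂ (Fin 3) → Prop
  | comm (i j : Fin 3) : FuzzyRel t
      (FreeAlgebra.ι ℂ i * FreeAlgebra.ι ℂ j - FreeAlgebra.ι ℂ j * FreeAlgebra.ι ℂ i)
      (∑ k, (2 * Complex.I * (t : ℂ) * epsC i j k) • FreeAlgebra.ι ℂ k)
  | sphere : FuzzyRel t (∑ i, FreeAlgebra.ι ℂ i * FreeAlgebra.ι ℂ i)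
      ((1 - (t : ℂ) ^ 2) • (1 : FreeAlgebra ℂ (Fin 3)))

/-- The fuzzy sphere algebra `A_λ`, the quotient of the free algebra on `x₁,x₂,x₃` by the
two-sided ideal generated by the fuzzy sphere relations. -/
abbrev FuzzyS2 (t : ℝ) := RingQuot (FuzzyRel t)

/-- The generators `x_i` of the fuzzy sphere algebra. -/
noncomputable def xgen (t : ℝ) (i : Fin 3) : FuzzyS2 t :=
  RingQuot.mkAlgHom ℂ (FuzzyRel t) (FreeAlgebra.ι ℂ i)

noncomputable section
namespace FuzzyPf
open Complex

section Rep
variable (t : ℝ) {B : Type} [Ring B] [Algebra ℂ B] (e f z : B)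

def gvec : Fin 3 → B := ![((2:ℂ)⁻¹) • (e + f), (Complex.I/2) • (f - e), z]

variable (hze : z * e = e * z + ((2*(t:ℂ)) • e))
variable (hzf : z * f = f * z - ((2*(t:ℂ)) • f))
variable (hef : e * f = ((1:ℂ) - (t:ℂ)^2) • (1:B) + ((2*(t:ℂ)) • z) - z * z)
variable (hfe : f * e = ((1:ℂ) - (t:ℂ)^2) • (1:B) - ((2*(t:ℂ)) • z) - z * z)

include hze hzf hef hfe in
theorem rep_rel : ∀ ⦃a b⦄, FuzzyRel t a b →
    FreeAlgebra.lift ℂ (gvec e f z) a = FreeAlgebra.lift ℂ (gvec e f z) b := by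
  intro a b rel
  induction rel with
  | comm i j =>
    simp only [map_sub, map_mul, map_sum, map_smul, FreeAlgebra.lift_ι_apply]
    fin_cases i <;> fin_cases j <;>
      simp only [gvec, Matrix.cons_val_zero, Matrix.cons_val_one, Matrix.head_cons,
        Matrix.cons_val_two, Matrix.tail_cons, Fin.sum_univ_three, epsC, Fin.isValue] <;>
      norm_num <;>
      simp only [mul_add, add_mul, mul_sub, sub_mul, smul_mul_assoc, mul_smul_comm,
        hze, hzf, hef, hfe] <;>
      match_scalars <;> (first | ring1 | (ring_nf; simp [Complex.I_sq]; try ring1) | norm_num)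
  | sphere =>
    simp only [map_sum, map_add, map_mul, map_smul, map_one, FreeAlgebra.lift_ι_apply,
      Fin.sum_univ_three, gvec, Matrix.cons_val_zero, Matrix.cons_val_one, Matrix.head_cons,
      Matrix.cons_val_two, Matrix.tail_cons]
    simp only [mul_add, add_mul, mul_sub, sub_mul, smul_mul_assoc, mul_smul_comm,
      hze, hzf, hef, hfe, smul_add, smul_sub, smul_smul]
    match_scalars <;> (first | ring1 | (ring_nf; simp [Complex.I_sq]; try ring1) | norm_num)

def rep : FuzzyS2 t →ₐ[ℂ] B :=
  RingQuot.liftAlgHom ℂ ⟨FreeAlgebra.lift ℂ (gvec e f z), rep_rel t e f z hze hzf hef hfe⟩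

theorem rep_xgen (i : Fin 3) : rep t e f z hze hzf hef hfe (xgen t i) = gvec e f z i := by
  rw [xgen, rep, RingQuot.liftAlgHom_mkAlgHom_apply, FreeAlgebra.lift_ι_apply]

theorem rep_e : rep t e f z hze hzf hef hfe (xgen t 0 + Complex.I • xgen t 1) = e := by
  rw [map_add, map_smul, rep_xgen, rep_xgen]
  simp only [gvec, Matrix.cons_val_zero, Matrix.cons_val_one, Matrix.head_cons]
  match_scalars <;> norm_num [Complex.ext_iff]

theorem rep_f : rep t e f z hze hzf hef hfe (xgen t 0 - Complex.I • xgen t 1) = f := by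
  rw [map_sub, map_smul, rep_xgen, rep_xgen]
  simp only [gvec, Matrix.cons_val_zero, Matrix.cons_val_one, Matrix.head_cons]
  match_scalars <;> norm_num [Complex.ext_iff]

theorem rep_z : rep t e f z hze hzf hef hfe (xgen t 2) = z := by
  rw [rep_xgen]; rfl

end Rep

variable (t : ℝ)

def eA : FuzzyS2 t := xgen t 0 + Complex.I • xgen t 1
def fA : FuzzyS2 t := xgen t 0 - Complex.I • xgen t 1
def zA : FuzzyS2 t := xgen t 2

/-- commutator relations in the algebra -/
theorem crel (i j : Fin 3) :
    xgen t i * xgen t j - xgen t j * xgen t i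
      = ∑ k, (2 * Complex.I * (t:ℂ) * epsC i j k) • xgen t k := by
  have h := RingQuot.mkAlgHom_rel ℂ (FuzzyRel.comm (t := t) i j)
  simpa only [map_sub, map_mul, map_sum, map_smul, xgen] using h

theorem srel : xgen t 0 * xgen t 0 + xgen t 1 * xgen t 1 + xgen t 2 * xgen t 2
    = ((1:ℂ) - (t:ℂ)^2) • 1 := by
  have h := RingQuot.mkAlgHom_rel ℂ (FuzzyRel.sphere (t := t))
  simpa only [map_sum, map_add, map_mul, map_smul, map_one, xgen, Fin.sum_univ_three] using h

theorem c01 : xgen t 0 * xgen t 1 = xgen t 1 * xgen t 0 + (2 * Complex.I * (t:ℂ)) • xgen t 2 := by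
  have h := crel t 0 1
  rw [Fin.sum_univ_three] at h
  norm_num [epsC] at h
  linear_combination (norm := module) h

theorem c20 : xgen t 2 * xgen t 0 = xgen t 0 * xgen t 2 + (2 * Complex.I * (t:ℂ)) • xgen t 1 := by
  have h := crel t 2 0
  rw [Fin.sum_univ_three] at h
  norm_num [epsC] at h
  linear_combination (norm := module) h

theorem c21 : xgen t 2 * xgen t 1 = xgen t 1 * xgen t 2 - (2 * Complex.I * (t:ℂ)) • xgen t 0 := by
  have h := crel t 2 1
  rw [Fin.sum_univ_three] at h
  norm_num [epsC] at h
  linear_combination (norm := module) h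

theorem hzeA : zA t * eA t = eA t * zA t + ((2*(t:ℂ)) • eA t) := by
  simp only [eA, zA, mul_add, add_mul, mul_smul_comm, smul_mul_assoc, smul_add, smul_smul,
    c20 t, c21 t]
  match_scalars <;> (first | ring1 | (ring_nf; simp [Complex.I_sq]; try ring1))

theorem hzfA : zA t * fA t = fA t * zA t - ((2*(t:ℂ)) • fA t) := by
  simp only [fA, zA, mul_sub, sub_mul, mul_smul_comm, smul_mul_assoc, smul_sub, smul_smul,
    c20 t, c21 t]
  match_scalars <;> (first | ring1 | (ring_nf; simp [Complex.I_sq]; try ring1))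

theorem hefA : eA t * fA t = ((1:ℂ) - (t:ℂ)^2) • (1 : FuzzyS2 t)
    + ((2*(t:ℂ)) • zA t) - zA t * zA t := by
  have hs := srel t
  have h01 := c01 t
  simp only [eA, fA, zA, mul_sub, sub_mul, mul_add, add_mul, mul_smul_comm, smul_mul_assoc,
    smul_sub, smul_add, smul_smul]
  rw [show xgen t 1 * xgen t 0 = xgen t 0 * xgen t 1 - (2 * Complex.I * (t:ℂ)) • xgen t 2 by
    linear_combination (norm := module) -h01]
  rw [show xgen t 0 * xgen t 0 = ((1:ℂ) - (t:ℂ)^2) • 1 - xgen t 1 * xgen t 1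
      - xgen t 2 * xgen t 2 by linear_combination (norm := module) hs]
  match_scalars <;> (first | ring1 | (ring_nf; simp [Complex.I_sq]; try ring1))

theorem hfeA : fA t * eA t = ((1:ℂ) - (t:ℂ)^2) • (1 : FuzzyS2 t)
    - ((2*(t:ℂ)) • zA t) - zA t * zA t := by
  have hs := srel t
  have h01 := c01 t
  simp only [eA, fA, zA, mul_sub, sub_mul, mul_add, add_mul, mul_smul_comm, smul_mul_assoc,
    smul_sub, smul_add, smul_smul]
  rw [show xgen t 1 * xgen t 0 = xgen t 0 * xgen t 1 - (2 * Complex.I * (t:ℂ)) • xgen t 2 by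
    linear_combination (norm := module) -h01]
  rw [show xgen t 0 * xgen t 0 = ((1:ℂ) - (t:ℂ)^2) • 1 - xgen t 1 * xgen t 1
      - xgen t 2 * xgen t 2 by linear_combination (norm := module) hs]
  match_scalars <;> (first | ring1 | (ring_nf; simp [Complex.I_sq]; try ring1))

theorem z_pow_e (n : ℕ) : zA t * eA t ^ n = eA t ^ n * zA t + ((2*(t:ℂ)*n) • eA t ^ n) := by
  induction n with
  | zero => simp
  | succ n ih =>
    rw [pow_succ, ← mul_assoc, ih, add_mul, smul_mul_assoc, mul_assoc, mul_assoc, hzeA]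
    rw [mul_add, mul_smul_comm, ← mul_assoc]
    match_scalars <;> push_cast <;> ring

theorem z_pow_f (n : ℕ) : zA t * fA t ^ n = fA t ^ n * zA t - ((2*(t:ℂ)*n) • fA t ^ n) := by
  induction n with
  | zero => simp
  | succ n ih =>
    rw [pow_succ, ← mul_assoc, ih, sub_mul, smul_mul_assoc, mul_assoc, mul_assoc, hzfA]
    rw [mul_sub, mul_smul_comm, ← mul_assoc]
    match_scalars <;> push_cast <;> ring

theorem zz_pow_f (n : ℕ) : zA t * (zA t * fA t ^ n)
    = fA t ^ n * zA t * zA t - ((4*(t:ℂ)*n) • (fA t ^ n * zA t))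
      + ((4*(t:ℂ)^2*(n:ℂ)^2) • fA t ^ n) := by
  rw [z_pow_f, mul_sub, mul_smul_comm, z_pow_f, ← mul_assoc, z_pow_f, sub_mul, smul_mul_assoc]
  match_scalars <;> push_cast <;> ring

theorem zz_pow_e (n : ℕ) : zA t * (zA t * eA t ^ n)
    = eA t ^ n * zA t * zA t + ((4*(t:ℂ)*n) • (eA t ^ n * zA t))
      + ((4*(t:ℂ)^2*(n:ℂ)^2) • eA t ^ n) := by
  rw [z_pow_e, mul_add, mul_smul_comm, z_pow_e, ← mul_assoc, z_pow_e, add_mul, smul_mul_assoc]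
  match_scalars <;> push_cast <;> ring

theorem e_pow_f (n : ℕ) : eA t * fA t ^ (n+1)
    = ((1:ℂ) - (t:ℂ)^2 - 4*(t:ℂ)^2*n - 4*(t:ℂ)^2*(n:ℂ)^2) • fA t ^ n
      + ((2*(t:ℂ) + 4*(t:ℂ)*n) • (fA t ^ n * zA t)) - fA t ^ n * zA t * zA t := by
  rw [pow_succ', ← mul_assoc, hefA, sub_mul, add_mul, smul_mul_assoc, smul_mul_assoc, one_mul,
    mul_assoc, z_pow_f, mul_sub, mul_smul_comm, ← mul_assoc, z_pow_f]
  simp only [sub_mul, add_mul, smul_mul_assoc, smul_sub, smul_add, smul_smul]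
  match_scalars <;> push_cast <;> ring

theorem f_pow_e (n : ℕ) : fA t * eA t ^ (n+1)
    = ((1:ℂ) - (t:ℂ)^2 - 4*(t:ℂ)^2*n - 4*(t:ℂ)^2*(n:ℂ)^2) • eA t ^ n
      - ((2*(t:ℂ) + 4*(t:ℂ)*n) • (eA t ^ n * zA t)) - eA t ^ n * zA t * zA t := by
  rw [pow_succ', ← mul_assoc, hfeA, sub_mul, sub_mul, smul_mul_assoc, smul_mul_assoc, one_mul,
    mul_assoc, z_pow_e, mul_add, mul_smul_comm, ← mul_assoc, z_pow_e]
  simp only [sub_mul, add_mul, smul_mul_assoc, smul_sub, smul_add, smul_smul]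
  match_scalars <;> push_cast <;> ring


def th (k : ℤ) : FuzzyS2 t := if 0 ≤ k then eA t ^ k.toNat else fA t ^ (-k).toNat

def w (k : ℤ) (m : ℕ) : FuzzyS2 t := th t k * zA t ^ m

theorem th_ofNat (n : ℕ) : th t (n : ℤ) = eA t ^ n := by
  simp [th]

theorem th_neg (n : ℕ) : th t (-(n : ℤ)) = fA t ^ n := by
  rcases Nat.eq_zero_or_pos n with h | h
  · subst h; simp [th]
  · rw [th, if_neg (by omega)]
    congr 1
    omega

theorem th_negSucc (n : ℕ) : th t (Int.negSucc n) = fA t ^ (n+1) := by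
  have : (Int.negSucc n) = -((n+1 : ℕ) : ℤ) := by simp [Int.negSucc_eq]
  rw [this, th_neg]

theorem w_zero : w t 0 0 = 1 := by
  rw [w, pow_zero, mul_one, show (0:ℤ) = ((0:ℕ):ℤ) from rfl, th_ofNat, pow_zero]

theorem z_mul_th (k : ℤ) : zA t * th t k = th t k * zA t + ((2*(t:ℂ)*(k:ℂ)) • th t k) := by
  cases k with
  | ofNat n =>
    rw [Int.ofNat_eq_coe, th_ofNat, z_pow_e]
    norm_num
  | negSucc n =>
    rw [th_negSucc, z_pow_f]
    have : ((Int.negSucc n : ℤ) : ℂ) = -((n:ℂ)+1) := by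
      rw [Int.negSucc_eq]; push_cast; ring
    rw [this]
    match_scalars <;> push_cast <;> ring

theorem z_mul_w (k : ℤ) (m : ℕ) :
    zA t * w t k m = w t k (m+1) + (2*(t:ℂ)*(k:ℂ)) • w t k m := by
  simp only [w]
  rw [← mul_assoc, z_mul_th, add_mul, smul_mul_assoc, mul_assoc, ← pow_succ']

theorem w_mul_z (k : ℤ) (m : ℕ) : w t k m * zA t = w t k (m+1) := by
  simp only [w]
  rw [mul_assoc, ← pow_succ]

def Sspan : Submodule ℂ (FuzzyS2 t) :=
  Submodule.span ℂ (Set.range fun p : ℤ × ℕ => w t p.1 p.2)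

theorem w_mem (k : ℤ) (m : ℕ) : w t k m ∈ Sspan t :=
  Submodule.subset_span ⟨(k,m), rfl⟩

theorem z_mul_w_mem (k : ℤ) (m : ℕ) : zA t * w t k m ∈ Sspan t := by
  rw [z_mul_w]
  exact add_mem (w_mem t _ _) (Submodule.smul_mem _ _ (w_mem t _ _))

theorem e_mul_w_mem (k : ℤ) (m : ℕ) : eA t * w t k m ∈ Sspan t := by
  cases k with
  | ofNat n =>
    have : eA t * w t (Int.ofNat n) m = w t ((n:ℤ)+1) m := by
      rw [Int.ofNat_eq_coe, w, th_ofNat, w, ← mul_assoc, ← pow_succ',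
        show ((n:ℤ)+1) = ((n+1:ℕ):ℤ) by push_cast; ring, th_ofNat]
    rw [this]; exact w_mem t _ _
  | negSucc n =>
    have : eA t * w t (Int.negSucc n) m
        = ((1:ℂ) - (t:ℂ)^2 - 4*(t:ℂ)^2*n - 4*(t:ℂ)^2*(n:ℂ)^2) • w t (-(n:ℤ)) m
          + ((2*(t:ℂ) + 4*(t:ℂ)*n) • w t (-(n:ℤ)) (m+1)) - w t (-(n:ℤ)) (m+2) := by
      rw [w, th_negSucc, ← mul_assoc, e_pow_f, w, w, w, th_neg]
      simp only [sub_mul, add_mul, smul_mul_assoc, mul_assoc, pow_succ']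
    rw [this]
    exact sub_mem (add_mem (Submodule.smul_mem _ _ (w_mem t _ _))
      (Submodule.smul_mem _ _ (w_mem t _ _))) (w_mem t _ _)

theorem f_mul_w_mem (k : ℤ) (m : ℕ) : fA t * w t k m ∈ Sspan t := by
  rcases lt_or_ge k 1 with hk | hk
  · -- k ≤ 0 : fA * w k m = w (k-1) m
    obtain ⟨n, rfl⟩ : ∃ n : ℕ, k = -(n:ℤ) := ⟨(-k).toNat, by omega⟩
    have : fA t * w t (-(n:ℤ)) m = w t (-((n+1:ℕ):ℤ)) m := by
      rw [w, th_neg, w, th_neg, ← mul_assoc, ← pow_succ']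
    rw [this]; exact w_mem t _ _
  · obtain ⟨n, rfl⟩ : ∃ n : ℕ, k = (n:ℤ)+1 := ⟨(k-1).toNat, by omega⟩
    have : fA t * w t ((n:ℤ)+1) m
        = ((1:ℂ) - (t:ℂ)^2 - 4*(t:ℂ)^2*n - 4*(t:ℂ)^2*(n:ℂ)^2) • w t (n:ℤ) m
          - ((2*(t:ℂ) + 4*(t:ℂ)*n) • w t (n:ℤ) (m+1)) - w t (n:ℤ) (m+2) := by
      rw [w, show ((n:ℤ)+1) = ((n+1:ℕ):ℤ) by push_cast; ring, th_ofNat, ← mul_assoc, f_pow_e,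
        w, w, w, th_ofNat]
      simp only [sub_mul, add_mul, smul_mul_assoc, mul_assoc, pow_succ']
    rw [this]
    exact sub_mem (sub_mem (Submodule.smul_mem _ _ (w_mem t _ _))
      (Submodule.smul_mem _ _ (w_mem t _ _))) (w_mem t _ _)

theorem xgen0_eq : xgen t 0 = ((2:ℂ)⁻¹) • (eA t + fA t) := by
  rw [eA, fA]; match_scalars <;> norm_num

theorem xgen1_eq : xgen t 1 = (Complex.I/2) • (fA t - eA t) := by
  rw [eA, fA]; match_scalars <;> (first | ring1 | (ring_nf; simp [Complex.I_sq]; try ring1))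

theorem xgen_mul_w_mem (i : Fin 3) (k : ℤ) (m : ℕ) : xgen t i * w t k m ∈ Sspan t := by
  have h0 : xgen t 0 * w t k m ∈ Sspan t := by
    rw [xgen0_eq, smul_mul_assoc, add_mul]
    exact Submodule.smul_mem _ _ (add_mem (e_mul_w_mem t k m) (f_mul_w_mem t k m))
  have h1 : xgen t 1 * w t k m ∈ Sspan t := by
    rw [xgen1_eq, smul_mul_assoc, sub_mul]
    exact Submodule.smul_mem _ _ (sub_mem (f_mul_w_mem t k m) (e_mul_w_mem t k m))
  have h2 := z_mul_w_mem t k m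
  fin_cases i
  · exact h0
  · exact h1
  · exact h2

theorem xgen_mul_mem (i : Fin 3) {s : FuzzyS2 t} (hs : s ∈ Sspan t) :
    xgen t i * s ∈ Sspan t := by
  induction hs using Submodule.span_induction with
  | mem x hx => obtain ⟨⟨k, m⟩, rfl⟩ := hx; exact xgen_mul_w_mem t i k m
  | zero => rw [mul_zero]; exact zero_mem _
  | add x y hx hy ihx ihy => rw [mul_add]; exact add_mem ihx ihy
  | smul a x hx ihx => rw [mul_smul_comm]; exact Submodule.smul_mem _ _ ihx

theorem mem_S (a : FuzzyS2 t) : a ∈ Sspan t := by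
  obtain ⟨x, rfl⟩ := RingQuot.mkAlgHom_surjective ℂ (FuzzyRel t) a
  have key : ∀ s ∈ Sspan t, RingQuot.mkAlgHom ℂ (FuzzyRel t) x * s ∈ Sspan t := by
    induction x using FreeAlgebra.induction with
    | grade0 r =>
      intro s hs
      rw [AlgHom.commutes, ← Algebra.smul_def]
      exact Submodule.smul_mem _ _ hs
    | grade1 i => intro s hs; exact xgen_mul_mem t i hs
    | mul a b iha ihb =>
      intro s hs
      rw [map_mul, mul_assoc]
      exact iha _ (ihb s hs)
    | add a b iha ihb =>
      intro s hs
      rw [map_add, add_mul]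
      exact add_mem (iha s hs) (ihb s hs)
  have h1 : (1 : FuzzyS2 t) ∈ Sspan t := by rw [← w_zero t]; exact w_mem t 0 0
  simpa using key 1 h1

theorem repr_exists (a : FuzzyS2 t) :
    ∃ c : (ℤ × ℕ) →₀ ℂ, a = c.sum fun p r => r • w t p.1 p.2 := by
  have := (Finsupp.mem_span_range_iff_exists_finsupp
    (v := fun p : ℤ × ℕ => w t p.1 p.2) (x := a)).1 (mem_S t a)
  obtain ⟨c, hc⟩ := this
  exact ⟨c, hc.symm⟩


/-! ### weight representations -/

abbrev Vw := ℤ →₀ ℂ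

def aval (x : ℂ) : ℂ := 1 - (t:ℂ)^2 - 2*(t:ℂ)*x - x^2

def Eop : Module.End ℂ Vw := Finsupp.lift Vw ℂ ℤ (fun n => Finsupp.single (n+1) 1)

variable (μ : ℂ)

def Zop : Module.End ℂ Vw := Finsupp.lift Vw ℂ ℤ (fun n => (μ + 2*(t:ℂ)*(n:ℂ)) • Finsupp.single n 1)

def Fop : Module.End ℂ Vw :=
  Finsupp.lift Vw ℂ ℤ (fun n => (aval t (μ + 2*(t:ℂ)*((n:ℂ)-1))) • Finsupp.single (n-1) 1)

theorem lift_single (f : ℤ → Vw) (n : ℤ) (r : ℂ) :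
    Finsupp.lift Vw ℂ ℤ f (Finsupp.single n r) = r • f n := by
  rw [Finsupp.lift_apply]; exact Finsupp.sum_single_index (zero_smul _ _)

theorem Eop_single (n : ℤ) (r : ℂ) :
    Eop (Finsupp.single n r) = Finsupp.single (n+1) r := by
  rw [Eop, lift_single, Finsupp.smul_single, smul_eq_mul, mul_one]

theorem Zop_single (n : ℤ) (r : ℂ) :
    Zop t μ (Finsupp.single n r) = (μ + 2*(t:ℂ)*(n:ℂ)) • Finsupp.single n r := by
  rw [Zop, lift_single, smul_comm, Finsupp.smul_single, smul_eq_mul, mul_one]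

theorem Fop_single (n : ℤ) (r : ℂ) :
    Fop t μ (Finsupp.single n r)
      = (aval t (μ + 2*(t:ℂ)*((n:ℂ)-1))) • Finsupp.single (n-1) r := by
  rw [Fop, lift_single, smul_comm, Finsupp.smul_single, smul_eq_mul, mul_one]

theorem hZE : Zop t μ * Eop = Eop * Zop t μ + ((2*(t:ℂ)) • Eop) := by
  apply Finsupp.lhom_ext
  intro n r
  simp only [Module.End.mul_apply, LinearMap.add_apply, LinearMap.sub_apply,
    LinearMap.smul_apply, Module.End.one_apply, Eop_single, Zop_single, Fop_single,
    map_smul, smul_smul, aval]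
  match_scalars <;> push_cast <;> ring

theorem hZF : Zop t μ * Fop t μ = Fop t μ * Zop t μ - ((2*(t:ℂ)) • Fop t μ) := by
  apply Finsupp.lhom_ext
  intro n r
  simp only [Module.End.mul_apply, LinearMap.add_apply, LinearMap.sub_apply,
    LinearMap.smul_apply, Module.End.one_apply, Eop_single, Zop_single, Fop_single,
    map_smul, smul_smul, aval]
  match_scalars <;> push_cast <;> ring

theorem hEF : Eop * Fop t μ
    = ((1:ℂ) - (t:ℂ)^2) • (1 : Module.End ℂ Vw) + ((2*(t:ℂ)) • Zop t μ) - Zop t μ * Zop t μ := by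
  apply Finsupp.lhom_ext
  intro n r
  simp only [Module.End.mul_apply, LinearMap.add_apply, LinearMap.sub_apply,
    LinearMap.smul_apply, Module.End.one_apply, Eop_single, Zop_single, Fop_single,
    map_smul, smul_smul, aval, sub_add_cancel]
  match_scalars <;> push_cast <;> ring

theorem hFE : Fop t μ * Eop
    = ((1:ℂ) - (t:ℂ)^2) • (1 : Module.End ℂ Vw) - ((2*(t:ℂ)) • Zop t μ) - Zop t μ * Zop t μ := by
  apply Finsupp.lhom_ext
  intro n r
  simp only [Module.End.mul_apply, LinearMap.add_apply, LinearMap.sub_apply,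
    LinearMap.smul_apply, Module.End.one_apply, Eop_single, Zop_single, Fop_single,
    map_smul, smul_smul, aval, add_sub_cancel_right]
  match_scalars <;> push_cast <;> ring

def piw : FuzzyS2 t →ₐ[ℂ] Module.End ℂ Vw :=
  rep t Eop (Fop t μ) (Zop t μ) (hZE t μ) (hZF t μ) (hEF t μ) (hFE t μ)

theorem piw_e : piw t μ (eA t) = Eop := by rw [eA]; exact rep_e t _ _ _ _ _ _ _
theorem piw_f : piw t μ (fA t) = Fop t μ := by rw [fA]; exact rep_f t _ _ _ _ _ _ _
theorem piw_z : piw t μ (zA t) = Zop t μ := by rw [zA]; exact rep_z t _ _ _ _ _ _ _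

theorem Zop_pow (m : ℕ) (n : ℤ) (r : ℂ) :
    (Zop t μ ^ m) (Finsupp.single n r) = (μ + 2*(t:ℂ)*(n:ℂ))^m • Finsupp.single n r := by
  induction m with
  | zero => simp
  | succ m ih =>
    rw [pow_succ', Module.End.mul_apply, ih, map_smul, Zop_single, smul_smul, ← pow_succ]

theorem Eop_pow (j : ℕ) (n : ℤ) (r : ℂ) :
    (Eop ^ j) (Finsupp.single n r) = Finsupp.single (n + (j:ℤ)) r := by
  induction j with
  | zero => simp
  | succ j ih =>
    rw [pow_succ', Module.End.mul_apply, ih, Eop_single]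
    congr 1
    push_cast
    ring

def Gq (j : ℕ) : Polynomial ℂ :=
  Polynomial.C ((1:ℂ) - (t:ℂ)^2 + 2*(t:ℂ)*(2*(t:ℂ)*((j:ℂ)+1)) - (2*(t:ℂ)*((j:ℂ)+1))^2)
    + Polynomial.C (2*(2*(t:ℂ)*((j:ℂ)+1)) - 2*(t:ℂ)) * Polynomial.X - Polynomial.X^2

theorem Gq_eval (j : ℕ) : (Gq t j).eval μ = aval t (μ - 2*(t:ℂ)*((j:ℂ)+1)) := by
  simp [Gq, aval]
  ring

theorem poly_quad_ne (a b : ℂ) :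
    Polynomial.C a + Polynomial.C b * Polynomial.X - Polynomial.X^2 ≠ 0 := by
  intro h
  have h2 := congrArg (fun p => Polynomial.coeff p 2) h
  simp [Polynomial.coeff_X_pow, Polynomial.coeff_C] at h2

theorem Gq_ne (j : ℕ) : Gq t j ≠ 0 := poly_quad_ne _ _

def Gneg : ℕ → Polynomial ℂ
  | 0 => 1
  | (j+1) => Gneg j * Gq t j

theorem Gneg_ne (j : ℕ) : Gneg t j ≠ 0 := by
  induction j with
  | zero => exact one_ne_zero
  | succ j ih => exact mul_ne_zero ih (Gq_ne t j)

theorem Fop_pow (j : ℕ) :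
    (Fop t μ ^ j) (Finsupp.single 0 1)
      = ((Gneg t j).eval μ) • Finsupp.single (-(j:ℤ)) 1 := by
  induction j with
  | zero => simp [Gneg]
  | succ j ih =>
    rw [pow_succ', Module.End.mul_apply, ih, map_smul, Fop_single, smul_smul]
    rw [show (-(j:ℤ) - 1) = -((j+1:ℕ):ℤ) by push_cast; ring]
    congr 1
    rw [show Gneg t (j+1) = Gneg t j * Gq t j from rfl, Polynomial.eval_mul]
    congr 1
    rw [Gq_eval]
    simp only [aval]
    push_cast
    ring

def Wpoly (k : ℤ) : Polynomial ℂ := if 0 ≤ k then 1 else Gneg t (-k).toNat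

theorem Wpoly_ne (k : ℤ) : Wpoly t k ≠ 0 := by
  rw [Wpoly]
  split
  · exact one_ne_zero
  · exact Gneg_ne t _

theorem th_delta (k : ℤ) :
    piw t μ (th t k) (Finsupp.single 0 1)
      = ((Wpoly t k).eval μ) • Finsupp.single k 1 := by
  cases k with
  | ofNat n =>
    rw [Int.ofNat_eq_coe, th_ofNat, map_pow, piw_e, Eop_pow, Wpoly, if_pos (by positivity)]
    simp
  | negSucc n =>
    rw [th_negSucc, map_pow, piw_f, Fop_pow, Wpoly, if_neg (by exact not_le.mpr (Int.negSucc_lt_zero n))]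
    have h1 : Int.negSucc n = -((n+1 : ℕ) : ℤ) := by simp [Int.negSucc_eq]
    rw [h1]
    norm_num

theorem w_delta (k : ℤ) (m : ℕ) :
    piw t μ (w t k m) (Finsupp.single 0 1)
      = ((Wpoly t k).eval μ * μ^m) • Finsupp.single k 1 := by
  rw [w, map_mul, Module.End.mul_apply, map_pow, piw_z, Zop_pow]
  have : μ + 2*(t:ℂ)*((0:ℤ):ℂ) = μ := by push_cast; ring
  rw [this, map_smul, th_delta, smul_smul, mul_comm]


/-! ### the center argument -/

theorem sum_if_eq (c : (ℤ×ℕ) →₀ ℂ) (q : ℤ×ℕ) :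
    (c.sum fun p r => if p = q then r else 0) = c q := by
  classical
  rw [Finsupp.sum, Finset.sum_ite_eq' c.support q (fun p => c p)]
  split
  · rfl
  · exact (Finsupp.notMem_support_iff.mp (by assumption)).symm

theorem sum_smul_out {α : Type} (v : Vw) (c : α →₀ ℂ) (g : α → ℂ → ℂ) :
    (c.sum fun p r => (g p r) • v) = (c.sum g) • v := by
  rw [Finsupp.sum, Finsupp.sum, Finset.sum_smul]

theorem end_sum_apply (c : (ℤ×ℕ) →₀ ℂ) (F : (ℤ×ℕ) → ℂ → Module.End ℂ Vw) (v : Vw) :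
    (c.sum F) v = c.sum fun p r => (F p r) v := by
  simpa using map_finsuppSum (LinearMap.applyₗ v) c F

theorem coord_sum (c : (ℤ×ℕ) →₀ ℂ) (g : ℤ×ℕ → ℂ → ℂ) (k : ℤ) :
    (c.sum fun p r => (g p r) • Finsupp.single p.1 (1:ℂ)) k
      = c.sum fun p r => if p.1 = k then g p r else 0 := by
  classical
  rw [Finsupp.sum_apply]
  apply Finsupp.sum_congr
  intro p _
  rw [Finsupp.smul_apply, Finsupp.single_apply, smul_eq_mul]
  by_cases h : p.1 = k <;> simp [h]

theorem th_zero : th t 0 = 1 := by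
  rw [show (0:ℤ) = ((0:ℕ):ℤ) from rfl, th_ofNat, pow_zero]

theorem act_delta0 (c : (ℤ × ℕ) →₀ ℂ) (μ : ℂ) :
    piw t μ (c.sum fun p r => r • w t p.1 p.2) (Finsupp.single 0 1)
      = c.sum fun p r => (r * ((Wpoly t p.1).eval μ * μ ^ p.2)) • Finsupp.single p.1 1 := by
  rw [map_finsuppSum, end_sum_apply]
  apply Finsupp.sum_congr
  intro p _
  rw [map_smul, LinearMap.smul_apply, w_delta, smul_smul]

theorem act_single (c : (ℤ × ℕ) →₀ ℂ) (h0 : ∀ p ∈ c.support, p.1 = 0) (μ : ℂ) (n : ℤ) :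
    piw t μ (c.sum fun p r => r • w t p.1 p.2) (Finsupp.single n 1)
      = (c.sum fun p r => r * (μ + 2*(t:ℂ)*(n:ℂ)) ^ p.2) • Finsupp.single n 1 := by
  rw [map_finsuppSum, end_sum_apply, ← sum_smul_out]
  apply Finsupp.sum_congr
  intro p hp
  rw [map_smul, LinearMap.smul_apply, h0 p hp, w, th_zero, one_mul, map_pow, piw_z,
    Zop_pow, smul_smul]

theorem central_scalar (ht : t ≠ 0) (a : FuzzyS2 t) (ha : ∀ b, a * b = b * a) :
    ∃ cc : ℂ, a = cc • (1 : FuzzyS2 t) := by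
  classical
  obtain ⟨c, hc⟩ := repr_exists t a
  have hops : ∀ (μ : ℂ) (b : FuzzyS2 t) (v : Vw),
      piw t μ b (piw t μ a v) = piw t μ a (piw t μ b v) := by
    intro μ b v
    rw [← Module.End.mul_apply, ← Module.End.mul_apply, ← map_mul, ← map_mul, ha b]
  -- step A : coefficients with k ≠ 0 vanish
  have hA : ∀ k : ℤ, k ≠ 0 → ∀ m : ℕ, c (k, m) = 0 := by
    intro k hk
    set Pk : Polynomial ℂ :=
      c.sum (fun p r => if p.1 = k then Polynomial.C r * Polynomial.X^p.2 else 0) with hPk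
    have hPkeval : ∀ μ : ℂ, Pk.eval μ = c.sum fun p r => if p.1 = k then r * μ^p.2 else 0 := by
      intro μ
      rw [hPk, ← Polynomial.coe_evalRingHom, map_finsuppSum]
      apply Finsupp.sum_congr
      intro p _
      by_cases h : p.1 = k <;> simp [h]
    have key : ∀ μ : ℂ, (2*(t:ℂ)*(k:ℂ)) * ((Wpoly t k).eval μ) * Pk.eval μ = 0 := by
      intro μ
      have h0 : Zop t μ (piw t μ a (Finsupp.single 0 1))
          = μ • piw t μ a (Finsupp.single 0 1) := by
        rw [← piw_z t μ, hops μ (zA t), piw_z,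
          show Zop t μ (Finsupp.single 0 1) = μ • Finsupp.single 0 1 by
            rw [Zop_single]; norm_num,
          map_smul]
      rw [hc, act_delta0, map_finsuppSum, Finsupp.smul_sum] at h0
      simp only [map_smul, Zop_single, smul_smul] at h0
      have h1 := congrArg (fun v : Vw => v k) h0
      rw [coord_sum, coord_sum] at h1
      have hL : (c.sum fun p r =>
            if p.1 = k then (r * ((Wpoly t p.1).eval μ * μ ^ p.2)) * (μ + 2*(t:ℂ)*((p.1):ℂ))
            else 0)
          = ((Wpoly t k).eval μ * (μ + 2*(t:ℂ)*(k:ℂ))) * Pk.eval μ := by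
        rw [hPkeval, Finsupp.mul_sum]
        apply Finsupp.sum_congr
        intro p _
        by_cases h : p.1 = k
        · rw [if_pos h, if_pos h, h]; ring
        · rw [if_neg h, if_neg h, mul_zero]
      have hR : (c.sum fun p r =>
            if p.1 = k then μ * (r * ((Wpoly t p.1).eval μ * μ ^ p.2)) else 0)
          = (μ * (Wpoly t k).eval μ) * Pk.eval μ := by
        rw [hPkeval, Finsupp.mul_sum]
        apply Finsupp.sum_congr
        intro p _
        by_cases h : p.1 = k
        · rw [if_pos h, if_pos h, h]; ring
        · rw [if_neg h, if_neg h, mul_zero]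
      rw [hL, hR] at h1
      linear_combination h1
    have hpoly : Polynomial.C (2*(t:ℂ)*(k:ℂ)) * Wpoly t k * Pk = 0 := by
      apply Polynomial.funext
      intro μ
      rw [Polynomial.eval_mul, Polynomial.eval_mul, Polynomial.eval_C, Polynomial.eval_zero]
      exact key μ
    have hc2 : (2*(t:ℂ)*(k:ℂ)) ≠ 0 := by
      apply mul_ne_zero
      · apply mul_ne_zero two_ne_zero
        exact Complex.ofReal_ne_zero.mpr ht
      · exact_mod_cast Int.cast_ne_zero.mpr hk
    have hPk0 : Pk = 0 := by
      rcases mul_eq_zero.mp hpoly with h | h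
      · rcases mul_eq_zero.mp h with h' | h'
        · exact absurd h' (Polynomial.C_ne_zero.mpr hc2)
        · exact absurd h' (Wpoly_ne t k)
      · exact h
    intro m
    have hcoeff : Pk.coeff m = c (k, m) := by
      rw [hPk, show ∀ q : Polynomial ℂ, q.coeff m = Polynomial.lcoeff ℂ m q from fun _ => rfl,
        map_finsuppSum]
      rw [show (fun (p : ℤ×ℕ) (r : ℂ) =>
          Polynomial.lcoeff ℂ m (if p.1 = k then Polynomial.C r * Polynomial.X^p.2 else 0))
          = fun p r => if p = (k, m) then r else 0 from ?_]
      · exact sum_if_eq c (k, m)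
      · funext p r
        by_cases h1 : p.1 = k
        · by_cases h2 : p.2 = m
          · simp [h1, h2, Polynomial.lcoeff_apply, Polynomial.coeff_C_mul,
              Polynomial.coeff_X_pow, Prod.ext_iff]
          · simp [h1, h2, Polynomial.lcoeff_apply, Polynomial.coeff_C_mul,
              Polynomial.coeff_X_pow, Prod.ext_iff, Ne.symm h2]
        · simp [h1, Prod.ext_iff, fun hh : p = (k,m) => h1 (by rw [hh])]
    rw [← hcoeff, hPk0, Polynomial.coeff_zero]
  -- support lives on k = 0
  have hsupp : ∀ p ∈ c.support, p.1 = 0 := by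
    intro p hp
    by_contra hne
    exact (Finsupp.mem_support_iff.mp hp) (by
      have := hA p.1 hne p.2
      simpa using this)
  -- step B : the polynomial in z is constant
  set P : Polynomial ℂ := c.sum (fun p r => Polynomial.C r * Polynomial.X^p.2) with hPdef
  have hPeval : ∀ μ : ℂ, P.eval μ = c.sum fun p r => r * μ^p.2 := by
    intro μ
    rw [hPdef, ← Polynomial.coe_evalRingHom, map_finsuppSum]
    apply Finsupp.sum_congr
    intro p _
    simp
  have hshift : ∀ μ : ℂ, P.eval (μ + 2*(t:ℂ)) = P.eval μ := by
    intro μ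
    have h0 : Eop (piw t μ a (Finsupp.single 0 1))
        = piw t μ a (Eop (Finsupp.single 0 1)) := by
      rw [← piw_e t μ, hops μ (eA t)]
    rw [show Eop (Finsupp.single (0:ℤ) (1:ℂ)) = Finsupp.single 1 1 by
      rw [Eop_single]; norm_num] at h0
    rw [hc, act_single t c hsupp μ 0, act_single t c hsupp μ 1, map_smul, Eop_single] at h0
    have h1 := congrArg (fun v : Vw => v 1) h0
    simp only [zero_add, Finsupp.smul_apply, Finsupp.single_eq_same, smul_eq_mul,
      mul_one] at h1
    rw [hPeval, hPeval]
    have e0 : μ + 2*(t:ℂ)*((0:ℤ):ℂ) = μ := by push_cast; ring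
    have e1 : μ + 2*(t:ℂ)*((1:ℤ):ℂ) = μ + 2*(t:ℂ) := by push_cast; ring
    rw [e0] at h1
    rw [e1] at h1
    exact h1.symm
  have hiter : ∀ n : ℕ, P.eval ((2*(t:ℂ))*n) = P.eval 0 := by
    intro n
    induction n with
    | zero => norm_num
    | succ n ih =>
      have : (2*(t:ℂ))*((n:ℂ)+1) = (2*(t:ℂ))*(n:ℂ) + 2*(t:ℂ) := by ring
      rw [show ((n+1:ℕ):ℂ) = (n:ℂ)+1 by push_cast; ring, this, hshift, ih]
  have hQ : P - Polynomial.C (P.eval 0) = 0 := by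
    apply Polynomial.eq_zero_of_infinite_isRoot
    apply Set.infinite_of_injective_forall_mem
      (f := fun n : ℕ => (2*(t:ℂ))*(n:ℂ))
    · intro n1 n2 h
      have h2t : (2*(t:ℂ)) ≠ 0 := mul_ne_zero two_ne_zero (Complex.ofReal_ne_zero.mpr ht)
      have := mul_left_cancel₀ h2t h
      exact_mod_cast this
    · intro n
      simp only [Set.mem_setOf_eq, Polynomial.IsRoot.def, Polynomial.eval_sub,
        Polynomial.eval_C, hiter n, sub_self]
  have hPC : P = Polynomial.C (P.eval 0) := by
    have := sub_eq_zero.mp hQ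
    exact this
  have hB : ∀ m : ℕ, m ≠ 0 → c (0, m) = 0 := by
    intro m hm
    have hcoeff : P.coeff m = c (0, m) := by
      rw [hPdef, show ∀ q : Polynomial ℂ, q.coeff m = Polynomial.lcoeff ℂ m q from fun _ => rfl,
        map_finsuppSum]
      rw [show (c.sum fun (p : ℤ×ℕ) (r : ℂ) =>
          Polynomial.lcoeff ℂ m (Polynomial.C r * Polynomial.X^p.2))
          = c.sum fun p r => if p = ((0:ℤ), m) then r else 0 from ?_]
      · exact sum_if_eq c (0, m)
      · apply Finsupp.sum_congr
        intro p hp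
        have hp1 : p.1 = 0 := hsupp p hp
        by_cases h2 : p.2 = m
        · have : p = ((0:ℤ), m) := Prod.ext hp1 h2
          simp [this, Polynomial.lcoeff_apply, Polynomial.coeff_C_mul, Polynomial.coeff_X_pow]
        · have : p ≠ ((0:ℤ), m) := fun hh => h2 (by rw [hh])
          simp [this, Polynomial.lcoeff_apply, Polynomial.coeff_C_mul,
            Polynomial.coeff_X_pow, Ne.symm h2]
    rw [← hcoeff, hPC, Polynomial.coeff_C, if_neg hm]
  -- conclude
  refine ⟨c (0, 0), ?_⟩
  have hcs : c = Finsupp.single ((0:ℤ), (0:ℕ)) (c (0, 0)) := by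
    ext p
    rcases p with ⟨k, m⟩
    by_cases hk : k = 0
    · subst hk
      by_cases hm : m = 0
      · subst hm; simp
      · rw [hB m hm, Finsupp.single_apply,
          if_neg (fun h => hm (congrArg Prod.snd h).symm)]
    · rw [hA k hk m, Finsupp.single_apply,
        if_neg (fun h => hk (congrArg Prod.fst h).symm)]
  have final : c.sum (fun p r => r • w t p.1 p.2) = c (0, 0) • (1 : FuzzyS2 t) := by
    conv_lhs => rw [hcs]
    rw [Finsupp.sum_single_index (by simp), w_zero]
  exact hc.trans final

end FuzzyPf

/-- For `λ ≠ 0`, the fuzzy sphere algebra `A_λ` has trivial center: an element commutes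
with every element if and only if it is a scalar multiple of the identity, i.e.
`Z(A_λ) = ℂ·1`. -/
theorem fuzzy_sphere_center_trivial (t : ℝ) (ht : t ≠ 0) :
    Subalgebra.center ℂ (FuzzyS2 t) = ⊥ ∧
      ∀ a : FuzzyS2 t, (∀ b : FuzzyS2 t, a * b = b * a) ↔
        ∃ c : ℂ, a = c • (1 : FuzzyS2 t) := by
  constructor
  · apply le_antisymm
    · intro a haZ
      have ha : ∀ b, a * b = b * a := fun b => (Subalgebra.mem_center_iff.mp haZ b).symm
      obtain ⟨cc, hcc⟩ := FuzzyPf.central_scalar t ht a ha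
      rw [Algebra.mem_bot]
      exact ⟨cc, by rw [hcc, Algebra.algebraMap_eq_smul_one]⟩
    · exact bot_le
  · intro a
    constructor
    · exact FuzzyPf.central_scalar t ht a
    · rintro ⟨cc, rfl⟩ b
      rw [smul_mul_assoc, one_mul, mul_smul_comm, mul_one]

end
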